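/- For all t > 0, ν > 0 and y ∈ ℝ, ∫₀ᵗ G_σ(t−s,y)/√(2πνs) ds = (1/(2√(νσ))) Erfc(|y|/√(2σt)) ≤ (√(πt)/√(2ν)) · G_σ(t,y). -/

import Mathlib

open Real MeasureTheory Set
set_option maxHeartbeats 1000000

noncomputable def heatKernel (ν t x : ℝ) : ℝ :=
  (1 / Real.sqrt (2 * Real.pi * ν * t)) * Real.exp (-(x ^ 2) / (2 * ν * t))

noncomputable def Erfc (x : ℝ) : ℝ :=
  (2 / Real.sqrt Real.pi) * ∫ u in Set.Ioi x, Real.exp (-u ^ 2)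

lemma gauss_Ioi {c : ℝ} : ∫ v in Ioi (0:ℝ), Real.exp (-(c*v^2)) = Real.sqrt (π/c)/2 := by
  simpa [neg_mul] using integral_gaussian_Ioi c

lemma exp_Ioi {c : ℝ} (hc : 0 < c) : ∫ w in Ioi (0:ℝ), Real.exp (-(c*w)) = 1/c := by
  have := Real.integral_rpow_mul_exp_neg_mul_Ioi one_pos hc
  simpa [Real.Gamma_one] using this

lemma gauss_translate (x : ℝ) :
    ∫ u in Ioi x, Real.exp (-(u - x)^2) = ∫ v in Ioi (0:ℝ), Real.exp (-v^2) := by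
  have h : Ioi x = (fun v => v + x) '' Ioi (0:ℝ) := by
    rw [image_add_const_Ioi, zero_add]
  rw [h, integral_image_eq_integral_abs_deriv_smul (f := fun v => v + x) (f' := fun _ => 1)
      measurableSet_Ioi
      (fun v _ => ((hasDerivAt_id' v).add_const x).hasDerivWithinAt)
      (fun a _ b _ hab => by simpa using hab)]
  simp

lemma erfc_bound {x : ℝ} (hx : 0 ≤ x) :
    ∫ u in Ioi x, Real.exp (-u^2) ≤ Real.exp (-x^2) * (Real.sqrt π / 2) := by
  have hint : IntegrableOn (fun u => Real.exp (-x^2) * Real.exp (-(u-x)^2)) (Ioi x) := by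
    apply Integrable.integrableOn
    have : Integrable (fun u : ℝ => Real.exp (-1*(u-x)^2)) :=
      (integrable_exp_neg_mul_sq one_pos).comp_sub_right x
    simpa [neg_mul] using this.const_mul (Real.exp (-x^2))
  have h1 : ∫ u in Ioi x, Real.exp (-u^2)
      ≤ ∫ u in Ioi x, Real.exp (-x^2) * Real.exp (-(u-x)^2) := by
    apply setIntegral_mono_on _ hint measurableSet_Ioi
    · intro u hu
      rw [← Real.exp_add, Real.exp_le_exp]
      nlinarith [le_of_lt (mem_Ioi.mp hu)]
    · apply Integrable.integrableOn
      simpa [neg_mul] using integrable_exp_neg_mul_sq (one_pos (α := ℝ))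
  calc ∫ u in Ioi x, Real.exp (-u^2) ≤ _ := h1
    _ = Real.exp (-x^2) * ∫ u in Ioi x, Real.exp (-(u-x)^2) := integral_const_mul _ _
    _ = Real.exp (-x^2) * (Real.sqrt π / 2) := by
        rw [gauss_translate]
        congr 1
        simpa using gauss_Ioi (c := 1)

lemma image_sq_sub {b : ℝ} (hb : 0 ≤ b) :
    (fun u : ℝ => u^2 - b) '' Ioi (Real.sqrt b) = Ioi 0 := by
  ext z
  simp only [mem_image, mem_Ioi]
  constructor
  · rintro ⟨u, hu, rfl⟩
    have h0 : 0 ≤ Real.sqrt b := Real.sqrt_nonneg b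
    have h2 := Real.sq_sqrt hb
    nlinarith
  · intro hz
    refine ⟨Real.sqrt (b+z), Real.sqrt_lt_sqrt hb (by linarith), ?_⟩
    rw [Real.sq_sqrt (by linarith)]; ring

noncomputable def Faux (b v w : ℝ) : ℝ := Real.exp (-w) * Real.exp (-((b+w)*v^2))

lemma Faux_split (b v w : ℝ) :
    Faux b v w = Real.exp (-(b*v^2)) * Real.exp (-((1+v^2)*w)) := by
  unfold Faux; rw [← Real.exp_add, ← Real.exp_add]; ring_nf

lemma Faux_pos (b v w : ℝ) : 0 < Faux b v w := by
  unfold Faux; positivity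

lemma J_eq {b : ℝ} (hb : 0 ≤ b) :
    ∫ v in Ioi (0:ℝ), Real.exp (-(b*v^2)) / (1+v^2)
      = Real.sqrt π * Real.exp b * ∫ u in Ioi (Real.sqrt b), Real.exp (-u^2) := by
  have h1 : ∀ v : ℝ, Real.exp (-(b*v^2)) / (1+v^2)
      = ∫ w in Ioi (0:ℝ), Faux b v w := by
    intro v
    have hv : (0:ℝ) < 1 + v^2 := by positivity
    have : (∫ w in Ioi (0:ℝ), Faux b v w)
        = ∫ w in Ioi (0:ℝ), Real.exp (-(b*v^2)) * Real.exp (-((1+v^2)*w)) :=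
      integral_congr_ae (Filter.Eventually.of_forall fun w => Faux_split b v w)
    rw [this, integral_const_mul, exp_Ioi hv, mul_one_div]
  have hmeas : AEStronglyMeasurable (fun p : ℝ × ℝ => Faux b p.1 p.2)
      ((volume.restrict (Ioi (0:ℝ))).prod (volume.restrict (Ioi (0:ℝ)))) := by
    apply Continuous.aestronglyMeasurable
    unfold Faux
    fun_prop
  have hslice : ∀ v : ℝ, Integrable (fun w => Faux b v w) (volume.restrict (Ioi (0:ℝ))) := by
    intro v
    have hv : (0:ℝ) < 1 + v^2 := by positivity
    exact (((exp_neg_integrableOn_Ioi 0 hv)).const_mul (Real.exp (-(b*v^2)))).congr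
      (Filter.Eventually.of_forall fun w => by
        show Real.exp (-(b*v^2)) * Real.exp (-(1+v^2)*w) = Faux b v w
        rw [Faux_split, neg_mul])
  have heq : ∀ v : ℝ, (∫ w in Ioi (0:ℝ), ‖Faux b v w‖)
      = Real.exp (-(b*v^2)) / (1+v^2) := by
    intro v
    rw [show (∫ w in Ioi (0:ℝ), ‖Faux b v w‖) = ∫ w in Ioi (0:ℝ), Faux b v w from
      integral_congr_ae (Filter.Eventually.of_forall fun w => by
        simp [abs_of_pos (Faux_pos b v w)])]
    exact (h1 v).symm
  have hint : Integrable (fun p : ℝ × ℝ => Faux b p.1 p.2)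
      ((volume.restrict (Ioi (0:ℝ))).prod (volume.restrict (Ioi (0:ℝ)))) := by
    rw [integrable_prod_iff hmeas]
    constructor
    · exact Filter.Eventually.of_forall fun v => hslice v
    · apply Integrable.mono (g := fun v : ℝ => (1+v^2)⁻¹)
          integrable_inv_one_add_sq.integrableOn
      · exact hmeas.norm.integral_prod_right'
      · filter_upwards with v
        rw [Real.norm_eq_abs, Real.norm_eq_abs]
        have hv : (0:ℝ) < 1 + v^2 := by positivity
        rw [show (∫ y in Ioi (0:ℝ), ‖Faux b v y‖) = Real.exp (-(b*v^2)) / (1+v^2) from heq v]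
        rw [abs_of_pos (by positivity), abs_of_pos (by positivity)]
        rw [div_le_iff₀ hv, inv_mul_cancel₀ (ne_of_gt hv)]
        exact Real.exp_le_one_iff.mpr (neg_nonpos.mpr (by positivity))
  have h2 : ∫ v in Ioi (0:ℝ), ∫ w in Ioi (0:ℝ), Faux b v w
      = ∫ w in Ioi (0:ℝ), ∫ v in Ioi (0:ℝ), Faux b v w := integral_integral_swap hint
  have h3 : ∀ w : ℝ, w ∈ Ioi (0:ℝ) → (∫ v in Ioi (0:ℝ), Faux b v w)
      = Real.exp (-w) * (Real.sqrt (π/(b+w)) / 2) := by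
    intro w _
    unfold Faux
    rw [integral_const_mul, gauss_Ioi]
  have h4 : ∫ w in Ioi (0:ℝ), Real.exp (-w) * (Real.sqrt (π/(b+w)) / 2)
      = ∫ u in Ioi (Real.sqrt b),
          |2*u| * (Real.exp (-(u^2-b)) * (Real.sqrt (π/(b+(u^2-b))) / 2)) := by
    rw [← image_sq_sub hb]
    rw [integral_image_eq_integral_abs_deriv_smul (f := fun u => u^2 - b)
        (f' := fun u => 2*u) measurableSet_Ioi
        (fun u _ => by
          simpa using ((hasDerivAt_pow 2 u).sub_const b).hasDerivWithinAt)
        (fun p hp q hq hpq => by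
          simp only [mem_Ioi] at hp hq
          have h0 := Real.sqrt_nonneg b
          simp only [sub_left_inj] at hpq
          nlinarith)]
    simp [smul_eq_mul]
  have h5 : ∀ u : ℝ, u ∈ Ioi (Real.sqrt b) →
      |2*u| * (Real.exp (-(u^2-b)) * (Real.sqrt (π/(b+(u^2-b))) / 2))
      = Real.sqrt π * Real.exp b * Real.exp (-u^2) := by
    intro u hu
    simp only [mem_Ioi] at hu
    have hu0 : 0 < u := lt_of_le_of_lt (Real.sqrt_nonneg b) hu
    have h6 : b + (u^2 - b) = u^2 := by ring
    have h7 : Real.sqrt (π / u^2) = Real.sqrt π / u := by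
      rw [Real.sqrt_div Real.pi_nonneg, Real.sqrt_sq hu0.le]
    have h8 : Real.exp (-(u^2-b)) = Real.exp b * Real.exp (-u^2) := by
      rw [← Real.exp_add]; ring_nf
    rw [h6, h7, h8, abs_of_pos (by positivity)]
    field_simp
  calc ∫ v in Ioi (0:ℝ), Real.exp (-(b*v^2)) / (1+v^2)
      = ∫ v in Ioi (0:ℝ), ∫ w in Ioi (0:ℝ), Faux b v w :=
        integral_congr_ae (Filter.Eventually.of_forall fun v => h1 v)
    _ = ∫ w in Ioi (0:ℝ), ∫ v in Ioi (0:ℝ), Faux b v w := h2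
    _ = ∫ w in Ioi (0:ℝ), Real.exp (-w) * (Real.sqrt (π/(b+w)) / 2) :=
        setIntegral_congr_fun measurableSet_Ioi h3
    _ = _ := by
        rw [h4, setIntegral_congr_fun measurableSet_Ioi h5, integral_const_mul]

lemma image_phi {t : ℝ} (ht : 0 < t) :
    (fun v : ℝ => t*v^2/(1+v^2)) '' Ioi 0 = Ioo 0 t := by
  ext s
  simp only [mem_image, mem_Ioi, mem_Ioo]
  constructor
  · rintro ⟨v, hv, rfl⟩
    have h1 : (0:ℝ) < 1 + v^2 := by positivity
    constructor
    · positivity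
    · rw [div_lt_iff₀ h1]; nlinarith
  · rintro ⟨hs0, hst⟩
    have h2 : (0:ℝ) < t - s := by linarith
    refine ⟨Real.sqrt (s/(t-s)), Real.sqrt_pos.mpr (by positivity), ?_⟩
    rw [Real.sq_sqrt (by positivity)]
    field_simp
    ring

lemma phi_deriv {t : ℝ} (v : ℝ) :
    HasDerivAt (fun v : ℝ => t*v^2/(1+v^2)) (2*t*v/(1+v^2)^2) v := by
  have h1 : (0:ℝ) < 1 + v^2 := by positivity
  have := (((hasDerivAt_pow 2 v).const_mul t).div ((hasDerivAt_pow 2 v).const_add 1)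
    (ne_of_gt h1))
  refine HasDerivAt.congr_deriv this ?_
  norm_num
  ring

lemma phi_inj {t : ℝ} (ht : 0 < t) :
    InjOn (fun v : ℝ => t*v^2/(1+v^2)) (Ioi 0) := by
  intro p hp q hq hpq
  simp only [mem_Ioi] at hp hq
  have h1 : (0:ℝ) < 1 + p^2 := by positivity
  have h2 : (0:ℝ) < 1 + q^2 := by positivity
  simp only [div_eq_div_iff (ne_of_gt h1) (ne_of_gt h2)] at hpq
  have h4 : p^2 = q^2 := by
    have h3 : t*p^2 = t*q^2 := by nlinarith [hpq]
    exact mul_left_cancel₀ (ne_of_gt ht) h3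
  nlinarith [h4]

lemma integrand_eq (ν σ t y : ℝ) (hν : 0 < ν) (hσ : 0 < σ) (ht : 0 < t)
    {v : ℝ} (hv : 0 < v) :
    |2*t*v/(1+v^2)^2| * (heatKernel σ (t - t*v^2/(1+v^2)) y
        / Real.sqrt (2*π*ν*(t*v^2/(1+v^2))))
      = (Real.exp (-(y^2/(2*σ*t))) / (π * Real.sqrt (σ*ν)))
          * (Real.exp (-(y^2/(2*σ*t)*v^2)) / (1+v^2)) := by
  have h1 : (0:ℝ) < 1 + v^2 := by positivity
  have hts : t - t*v^2/(1+v^2) = t/(1+v^2) := by field_simp; ring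
  rw [hts]
  unfold heatKernel
  have hsν : (0:ℝ) < Real.sqrt (σ*ν) := Real.sqrt_pos.mpr (by positivity)
  have hS : Real.sqrt (2*π*σ*(t/(1+v^2))) * Real.sqrt (2*π*ν*(t*v^2/(1+v^2)))
      = 2*π*t*Real.sqrt (σ*ν)*v/(1+v^2) := by
    rw [← Real.sqrt_mul (by positivity)]
    rw [show (2*π*σ*(t/(1+v^2))) * (2*π*ν*(t*v^2/(1+v^2)))
        = (2*π*t*Real.sqrt (σ*ν)*v/(1+v^2))^2 from by
      have h := Real.sq_sqrt (show (0:ℝ) ≤ σ*ν by positivity)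
      linear_combination (-(2*π*t*v/(1+v^2))^2) * h]
    exact Real.sqrt_sq (by positivity)
  have hexp : Real.exp (-(y^2)/(2*σ*(t/(1+v^2))))
      = Real.exp (-(y^2/(2*σ*t))) * Real.exp (-(y^2/(2*σ*t)*v^2)) := by
    rw [← Real.exp_add]
    congr 1
    field_simp
    ring
  have hS1 : (0:ℝ) < Real.sqrt (2*π*σ*(t/(1+v^2))) := Real.sqrt_pos.mpr (by positivity)
  have hS2 : (0:ℝ) < Real.sqrt (2*π*ν*(t*v^2/(1+v^2))) := Real.sqrt_pos.mpr (by positivity)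
  rw [abs_of_pos (by positivity), hexp]
  rw [show (1 / Real.sqrt (2*π*σ*(t/(1+v^2))))
        * (Real.exp (-(y^2/(2*σ*t))) * Real.exp (-(y^2/(2*σ*t)*v^2)))
        / Real.sqrt (2*π*ν*(t*v^2/(1+v^2)))
      = (Real.exp (-(y^2/(2*σ*t))) * Real.exp (-(y^2/(2*σ*t)*v^2)))
        / (Real.sqrt (2*π*σ*(t/(1+v^2))) * Real.sqrt (2*π*ν*(t*v^2/(1+v^2)))) from by
    rw [div_mul_eq_mul_div, one_mul, div_div]]
  rw [hS]
  revert hsν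
  generalize Real.sqrt (σ*ν) = s'
  intro hsν
  have hπ := Real.pi_pos
  field_simp

theorem stmt_7 (ν σ t y : ℝ) (hν : 0 < ν) (hσ : 0 < σ) (ht : 0 < t) :
    (∫ s in (0:ℝ)..t, heatKernel σ (t - s) y / Real.sqrt (2 * Real.pi * ν * s)) =
      (1 / (2 * Real.sqrt (ν * σ))) * Erfc (|y| / Real.sqrt (2 * σ * t)) ∧
    (1 / (2 * Real.sqrt (ν * σ))) * Erfc (|y| / Real.sqrt (2 * σ * t)) ≤
      (Real.sqrt (Real.pi * t) / Real.sqrt (2 * ν)) * heatKernel σ t y := by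
  set b : ℝ := y^2/(2*σ*t) with hbdef
  have hb : 0 ≤ b := by positivity
  have hsqrtb : Real.sqrt b = |y| / Real.sqrt (2*σ*t) := by
    rw [hbdef, Real.sqrt_div (sq_nonneg y), Real.sqrt_sq_eq_abs]
  have hπ : (0:ℝ) < Real.sqrt π := Real.sqrt_pos.mpr Real.pi_pos
  have hνσ : (0:ℝ) < Real.sqrt (ν*σ) := Real.sqrt_pos.mpr (by positivity)
  have hσν : Real.sqrt (σ*ν) = Real.sqrt (ν*σ) := by rw [mul_comm]
  have hππ : Real.sqrt π * Real.sqrt π = π := Real.mul_self_sqrt Real.pi_nonneg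
  -- the equality
  have hconst : ∀ I : ℝ, Real.exp (-b)/(π*Real.sqrt (ν*σ)) * (Real.sqrt π * Real.exp b * I)
      = 1/(2*Real.sqrt (ν*σ)) * (2/Real.sqrt π * I) := by
    intro I
    calc Real.exp (-b)/(π*Real.sqrt (ν*σ)) * (Real.sqrt π * Real.exp b * I)
        = (Real.exp (-b) * Real.exp b) * (Real.sqrt π * I)/(π*Real.sqrt (ν*σ)) := by ring
      _ = Real.sqrt π * I/(π*Real.sqrt (ν*σ)) := by
          rw [← Real.exp_add]; simp
      _ = 1/(2*Real.sqrt (ν*σ)) * (2/Real.sqrt π * I) := by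
          field_simp
          linear_combination I * hππ
  have key : (∫ s in (0:ℝ)..t, heatKernel σ (t - s) y / Real.sqrt (2 * π * ν * s)) =
      (1 / (2 * Real.sqrt (ν * σ))) * Erfc (|y| / Real.sqrt (2 * σ * t)) := by
    calc (∫ s in (0:ℝ)..t, heatKernel σ (t - s) y / Real.sqrt (2 * π * ν * s))
        = ∫ s in Ioo (0:ℝ) t, heatKernel σ (t - s) y / Real.sqrt (2 * π * ν * s) := by
          rw [intervalIntegral.integral_of_le ht.le, MeasureTheory.integral_Ioc_eq_integral_Ioo]
      _ = ∫ v in Ioi (0:ℝ), |2*t*v/(1+v^2)^2| •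
            (heatKernel σ (t - t*v^2/(1+v^2)) y / Real.sqrt (2*π*ν*(t*v^2/(1+v^2)))) := by
          rw [← image_phi ht, integral_image_eq_integral_abs_deriv_smul
            (f := fun v : ℝ => t*v^2/(1+v^2)) (f' := fun v => 2*t*v/(1+v^2)^2)
            measurableSet_Ioi (fun v _ => (phi_deriv v).hasDerivWithinAt) (phi_inj ht)]
      _ = ∫ v in Ioi (0:ℝ), (Real.exp (-b) / (π * Real.sqrt (σ*ν)))
            * (Real.exp (-(b*v^2)) / (1+v^2)) := by
          apply setIntegral_congr_fun measurableSet_Ioi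
          intro v hv
          simp only [smul_eq_mul]
          rw [integrand_eq ν σ t y hν hσ ht (mem_Ioi.mp hv)]
      _ = (Real.exp (-b) / (π * Real.sqrt (σ*ν)))
            * ∫ v in Ioi (0:ℝ), Real.exp (-(b*v^2)) / (1+v^2) := integral_const_mul _ _
      _ = (Real.exp (-b) / (π * Real.sqrt (ν*σ)))
            * (Real.sqrt π * Real.exp b * ∫ u in Ioi (Real.sqrt b), Real.exp (-u^2)) := by
          rw [J_eq hb, hσν]
      _ = 1/(2*Real.sqrt (ν*σ))
            * (2/Real.sqrt π * ∫ u in Ioi (Real.sqrt b), Real.exp (-u^2)) := hconst _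
      _ = (1 / (2 * Real.sqrt (ν * σ))) * Erfc (|y| / Real.sqrt (2 * σ * t)) := by
          rw [← hsqrtb]
          rfl
  refine ⟨key, ?_⟩
  -- the inequality
  have hx0 : 0 ≤ |y| / Real.sqrt (2*σ*t) := by positivity
  have hx2 : (|y| / Real.sqrt (2*σ*t))^2 = b := by
    rw [div_pow, sq_abs, Real.sq_sqrt (by positivity), hbdef]
  have hRHS : (Real.sqrt (π * t) / Real.sqrt (2 * ν)) * heatKernel σ t y
      = (1 / (2 * Real.sqrt (ν*σ))) * Real.exp (-b) := by
    unfold heatKernel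
    have hprod : Real.sqrt (2*ν) * Real.sqrt (2*π*σ*t)
        = 2*Real.sqrt (ν*σ) * Real.sqrt (π*t) := by
      rw [← Real.sqrt_mul (by positivity)]
      rw [show (2*ν)*(2*π*σ*t) = (2*Real.sqrt (ν*σ) * Real.sqrt (π*t))^2 from by
        have h1 := Real.sq_sqrt (show (0:ℝ) ≤ ν*σ by positivity)
        have h2 := Real.sq_sqrt (show (0:ℝ) ≤ π*t by positivity)
        nlinarith [h1, h2]]
      exact Real.sqrt_sq (by positivity)
    have hb' : -(y^2)/(2*σ*t) = -b := by rw [hbdef]; ring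
    rw [hb']
    have hπt : (0:ℝ) < Real.sqrt (π*t) := Real.sqrt_pos.mpr (by positivity)
    have h2ν : (0:ℝ) < Real.sqrt (2*ν) := Real.sqrt_pos.mpr (by positivity)
    have h2πσt : (0:ℝ) < Real.sqrt (2*π*σ*t) := Real.sqrt_pos.mpr (by positivity)
    have hc : Real.sqrt (π*t) / (Real.sqrt (2*ν) * Real.sqrt (2*π*σ*t))
        = 1 / (2 * Real.sqrt (ν*σ)) := by
      rw [hprod, div_eq_div_iff (by positivity) (by positivity)]
      ring
    calc Real.sqrt (π*t) / Real.sqrt (2*ν)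
          * ((1 / Real.sqrt (2*π*σ*t)) * Real.exp (-b))
        = (Real.sqrt (π*t) / (Real.sqrt (2*ν) * Real.sqrt (2*π*σ*t))) * Real.exp (-b) := by
          ring
      _ = 1 / (2 * Real.sqrt (ν*σ)) * Real.exp (-b) := by rw [hc]
  rw [hRHS]
  apply mul_le_mul_of_nonneg_left _ (by positivity)
  calc Erfc (|y| / Real.sqrt (2*σ*t))
      = (2 / Real.sqrt π) * ∫ u in Ioi (|y| / Real.sqrt (2*σ*t)), Real.exp (-u^2) := rfl
    _ ≤ (2 / Real.sqrt π) * (Real.exp (-(|y| / Real.sqrt (2*σ*t))^2) * (Real.sqrt π / 2)) := by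
        apply mul_le_mul_of_nonneg_left (erfc_bound hx0) (by positivity)
    _ = Real.exp (-b) := by
        rw [hx2]
        field_simp
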